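/- Every quadratic polynomial map G = (g₁,g₂,g₃,g₄) : ℂ² → ℂ⁴ with g₄ linear (nonconstant) and such that the homogeneous degree-2 parts of g₁, g₂, g₃ are linearly independent, is linearly equivalent to (x²+ay, y², xy, x) for some a ∈ ℂ; hence it is linearly equivalent to (x²+y, y², xy, x) if a ≠ 0 and to (x², y², xy, x) if a = 0. -/

import Mathlib

/-- Linear (affine) equivalence of polynomial maps `ℂ² → ℂ⁴`. -/
def LinEquiv4 (F G : ℂ × ℂ → ℂ × ℂ × ℂ × ℂ) : Prop :=
  ∃ (L : (ℂ × ℂ × ℂ × ℂ) ≃ᵃ[ℂ] (ℂ × ℂ × ℂ × ℂ)) (R : (ℂ × ℂ) ≃ᵃ[ℂ] (ℂ × ℂ)),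
    ∀ p : ℂ × ℂ, F p = L (G (R p))

namespace Stmt16Aux

def mf2 (m00 m01 m10 m11 : ℂ) (p : ℂ × ℂ) : ℂ × ℂ :=
  (m00 * p.1 + m01 * p.2, m10 * p.1 + m11 * p.2)

def lm2 (m00 m01 m10 m11 : ℂ) : (ℂ × ℂ) →ₗ[ℂ] (ℂ × ℂ) where
  toFun := mf2 m00 m01 m10 m11
  map_add' := by intro x y; simp [mf2, Prod.ext_iff]; constructor <;> ring
  map_smul' := by intro c x; simp [mf2, Prod.ext_iff, Prod.smul_def, smul_eq_mul]; constructor <;> ring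

noncomputable def ae2 (m00 m01 m10 m11 n00 n01 n10 n11 : ℂ) (c : ℂ × ℂ)
    (h1 : ∀ p, mf2 m00 m01 m10 m11 (mf2 n00 n01 n10 n11 p) = p)
    (h2 : ∀ p, mf2 n00 n01 n10 n11 (mf2 m00 m01 m10 m11 p) = p) :
    (ℂ × ℂ) ≃ᵃ[ℂ] (ℂ × ℂ) :=
  (LinearEquiv.ofLinear (lm2 m00 m01 m10 m11) (lm2 n00 n01 n10 n11)
    (LinearMap.ext h1) (LinearMap.ext h2)).toAffineEquiv.trans
    (AffineEquiv.constVAdd ℂ (ℂ × ℂ) c)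

@[simp] lemma ae2_apply (m00 m01 m10 m11 n00 n01 n10 n11 : ℂ) (c : ℂ × ℂ) (h1 h2) (p : ℂ × ℂ) :
    ae2 m00 m01 m10 m11 n00 n01 n10 n11 c h1 h2 p = c + mf2 m00 m01 m10 m11 p := by
  simp [ae2, lm2, AffineEquiv.trans_apply, vadd_eq_add]

def mf4 (m00 m01 m02 m03 m10 m11 m12 m13 m20 m21 m22 m23 m30 m31 m32 m33 : ℂ)
    (v : ℂ × ℂ × ℂ × ℂ) : ℂ × ℂ × ℂ × ℂ :=
  (m00 * v.1 + m01 * v.2.1 + m02 * v.2.2.1 + m03 * v.2.2.2,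
   m10 * v.1 + m11 * v.2.1 + m12 * v.2.2.1 + m13 * v.2.2.2,
   m20 * v.1 + m21 * v.2.1 + m22 * v.2.2.1 + m23 * v.2.2.2,
   m30 * v.1 + m31 * v.2.1 + m32 * v.2.2.1 + m33 * v.2.2.2)

def lm4 (m00 m01 m02 m03 m10 m11 m12 m13 m20 m21 m22 m23 m30 m31 m32 m33 : ℂ) :
    (ℂ × ℂ × ℂ × ℂ) →ₗ[ℂ] (ℂ × ℂ × ℂ × ℂ) where
  toFun := mf4 m00 m01 m02 m03 m10 m11 m12 m13 m20 m21 m22 m23 m30 m31 m32 m33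
  map_add' := by
    intro x y; simp [mf4, Prod.ext_iff]
    refine ⟨by ring, by ring, by ring, by ring⟩
  map_smul' := by
    intro c x; simp [mf4, Prod.ext_iff, Prod.smul_def, smul_eq_mul]
    refine ⟨by ring, by ring, by ring, by ring⟩

noncomputable def ae4 (m00 m01 m02 m03 m10 m11 m12 m13 m20 m21 m22 m23 m30 m31 m32 m33
    n00 n01 n02 n03 n10 n11 n12 n13 n20 n21 n22 n23 n30 n31 n32 n33 : ℂ) (c : ℂ × ℂ × ℂ × ℂ)
    (h1 : ∀ v, mf4 m00 m01 m02 m03 m10 m11 m12 m13 m20 m21 m22 m23 m30 m31 m32 m33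
          (mf4 n00 n01 n02 n03 n10 n11 n12 n13 n20 n21 n22 n23 n30 n31 n32 n33 v) = v)
    (h2 : ∀ v, mf4 n00 n01 n02 n03 n10 n11 n12 n13 n20 n21 n22 n23 n30 n31 n32 n33
          (mf4 m00 m01 m02 m03 m10 m11 m12 m13 m20 m21 m22 m23 m30 m31 m32 m33 v) = v) :
    (ℂ × ℂ × ℂ × ℂ) ≃ᵃ[ℂ] (ℂ × ℂ × ℂ × ℂ) :=
  (LinearEquiv.ofLinear (lm4 m00 m01 m02 m03 m10 m11 m12 m13 m20 m21 m22 m23 m30 m31 m32 m33)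
    (lm4 n00 n01 n02 n03 n10 n11 n12 n13 n20 n21 n22 n23 n30 n31 n32 n33)
    (LinearMap.ext h1) (LinearMap.ext h2)).toAffineEquiv.trans
    (AffineEquiv.constVAdd ℂ _ c)

@[simp] lemma ae4_apply (m00 m01 m02 m03 m10 m11 m12 m13 m20 m21 m22 m23 m30 m31 m32 m33
    n00 n01 n02 n03 n10 n11 n12 n13 n20 n21 n22 n23 n30 n31 n32 n33 : ℂ) (c : ℂ × ℂ × ℂ × ℂ)
    (h1 h2) (v) :
    ae4 m00 m01 m02 m03 m10 m11 m12 m13 m20 m21 m22 m23 m30 m31 m32 m33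
      n00 n01 n02 n03 n10 n11 n12 n13 n20 n21 n22 n23 n30 n31 n32 n33 c h1 h2 v
      = c + mf4 m00 m01 m02 m03 m10 m11 m12 m13 m20 m21 m22 m23 m30 m31 m32 m33 v := by
  simp [ae4, lm4, AffineEquiv.trans_apply, vadd_eq_add]

lemma linEquiv4_symm {F G} (h : LinEquiv4 F G) : LinEquiv4 G F := by
  obtain ⟨L, R, h⟩ := h
  exact ⟨L.symm, R.symm, fun p => by rw [h (R.symm p)]; simp⟩

lemma linEquiv4_trans {F G H} (h1 : LinEquiv4 F G) (h2 : LinEquiv4 G H) : LinEquiv4 F H := by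
  obtain ⟨L, R, h1⟩ := h1
  obtain ⟨L', R', h2⟩ := h2
  exact ⟨L'.trans L, R.trans R', fun p => by simp [AffineEquiv.trans_apply, h1, h2]⟩

lemma linEquiv4_congr {F G : ℂ × ℂ → ℂ × ℂ × ℂ × ℂ} (S : (ℂ × ℂ) ≃ᵃ[ℂ] (ℂ × ℂ))
    (h : ∀ p, F p = G (S p)) : LinEquiv4 F G :=
  ⟨AffineEquiv.refl ℂ _, S, fun p => by simpa using h p⟩

lemma linEquiv4_of_eq {F G : ℂ × ℂ → ℂ × ℂ × ℂ × ℂ} (h : ∀ p, F p = G p) : LinEquiv4 F G :=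
  ⟨AffineEquiv.refl ℂ _, AffineEquiv.refl ℂ _, fun p => by simpa using h p⟩

end Stmt16Aux

namespace Stmt16Aux

/-- Step 3: kill linear terms by translation + affine L. -/
lemma step23 (D₁ E₁ K₁ D₂ E₂ K₂ D₃ E₃ K₃ : ℂ) :
    LinEquiv4
      (fun p : ℂ × ℂ => (p.1^2 + D₁*p.1 + E₁*p.2 + K₁, p.2^2 + D₂*p.1 + E₂*p.2 + K₂,
                 p.1*p.2 + D₃*p.1 + E₃*p.2 + K₃, p.1))
      (fun p : ℂ × ℂ => (p.1^2 + E₁*p.2, p.2^2, p.1*p.2, p.1)) := by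
  apply linEquiv4_symm
  have h1 : ∀ v : ℂ × ℂ × ℂ × ℂ,
      mf4 1 0 0 (-(2*(-E₃)+D₁)) 0 1 0 (-D₂) 0 0 1 (-((-(E₂/2))+D₃)) 0 0 0 1
        (mf4 1 0 0 (2*(-E₃)+D₁) 0 1 0 D₂ 0 0 1 ((-(E₂/2))+D₃) 0 0 0 1 v) = v := by
    rintro ⟨v1,v2,v3,v4⟩; simp only [mf4, Prod.mk.injEq]
    refine ⟨by ring, by ring, by ring, by ring⟩
  have h2 : ∀ v : ℂ × ℂ × ℂ × ℂ,
      mf4 1 0 0 (2*(-E₃)+D₁) 0 1 0 D₂ 0 0 1 ((-(E₂/2))+D₃) 0 0 0 1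
        (mf4 1 0 0 (-(2*(-E₃)+D₁)) 0 1 0 (-D₂) 0 0 1 (-((-(E₂/2))+D₃)) 0 0 0 1 v) = v := by
    rintro ⟨v1,v2,v3,v4⟩; simp only [mf4, Prod.mk.injEq]
    refine ⟨by ring, by ring, by ring, by ring⟩
  have hid : ∀ p : ℂ × ℂ, mf2 1 0 0 1 (mf2 1 0 0 1 p) = p := by
    intro p; simp [mf2]
  refine ⟨ae4 1 0 0 (-(2*(-E₃)+D₁)) 0 1 0 (-D₂) 0 0 1 (-((-(E₂/2))+D₃)) 0 0 0 1
              1 0 0 (2*(-E₃)+D₁) 0 1 0 D₂ 0 0 1 ((-(E₂/2))+D₃) 0 0 0 1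
              (-(E₁*(-(E₂/2)) + K₁ - (-E₃)^2), -((-(E₂/2))^2 + E₂*(-(E₂/2)) + K₂),
               -(E₃*(-(E₂/2)) + K₃), -(-E₃)) h1 h2,
          ae2 1 0 0 1 1 0 0 1 (-E₃, -(E₂/2)) hid hid, ?_⟩
  intro p
  simp only [ae2_apply, ae4_apply, mf2, mf4, Prod.ext_iff, Prod.fst_add, Prod.snd_add]
  refine ⟨by ring, by ring, by ring, by ring⟩

/-- Scaling `H_a` to `H_1` when `a ≠ 0`. -/
lemma stepA {F : ℂ × ℂ → ℂ × ℂ × ℂ × ℂ} {a : ℂ} (ha : a ≠ 0)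
    (h : LinEquiv4 F (fun p : ℂ × ℂ => (p.1^2 + a*p.2, p.2^2, p.1*p.2, p.1))) :
    LinEquiv4 F (fun p : ℂ × ℂ => (p.1^2 + p.2, p.2^2, p.1*p.2, p.1)) := by
  refine linEquiv4_trans h ?_
  have h1 : ∀ v : ℂ × ℂ × ℂ × ℂ,
      mf4 1 0 0 0 0 (a^2)⁻¹ 0 0 0 0 a⁻¹ 0 0 0 0 1
        (mf4 1 0 0 0 0 (a^2) 0 0 0 0 a 0 0 0 0 1 v) = v := by
    rintro ⟨v1,v2,v3,v4⟩
    simp only [mf4, Prod.mk.injEq]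
    refine ⟨by ring, by field_simp; ring, by field_simp; ring, by ring⟩
  have h2 : ∀ v : ℂ × ℂ × ℂ × ℂ,
      mf4 1 0 0 0 0 (a^2) 0 0 0 0 a 0 0 0 0 1
        (mf4 1 0 0 0 0 (a^2)⁻¹ 0 0 0 0 a⁻¹ 0 0 0 0 1 v) = v := by
    rintro ⟨v1,v2,v3,v4⟩
    simp only [mf4, Prod.mk.injEq]
    refine ⟨by ring, by field_simp; ring, by field_simp; ring, by ring⟩
  have hr1 : ∀ p : ℂ × ℂ, mf2 1 0 0 a (mf2 1 0 0 a⁻¹ p) = p := by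
    intro p; simp [mf2]; field_simp
  have hr2 : ∀ p : ℂ × ℂ, mf2 1 0 0 a⁻¹ (mf2 1 0 0 a p) = p := by
    intro p; simp [mf2]; field_simp
  refine ⟨ae4 1 0 0 0 0 (a^2)⁻¹ 0 0 0 0 a⁻¹ 0 0 0 0 1
              1 0 0 0 0 (a^2) 0 0 0 0 a 0 0 0 0 1 0 h1 h2,
          ae2 1 0 0 a 1 0 0 a⁻¹ 0 hr1 hr2, ?_⟩
  intro p
  simp only [ae2_apply, ae4_apply, mf2, mf4, Prod.ext_iff, Prod.fst_add, Prod.snd_add,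
    Prod.fst_zero, Prod.snd_zero]
  refine ⟨by ring, by field_simp; ring, by field_simp; ring, by ring⟩

end Stmt16Aux

namespace Stmt16Aux

lemma step2 (M N : Matrix (Fin 3) (Fin 3) ℂ) (hMN : M * N = 1) (hNM : N * M = 1)
    (d1 e1 k1 d2 e2 k2 d3 e3 k3 : ℂ) :
    ∃ D1 E1 K1 D2 E2 K2 D3 E3 K3 : ℂ,
      LinEquiv4
        (fun p : ℂ × ℂ =>
          (N 0 0 * p.1^2 + N 0 1 * p.2^2 + N 0 2 * (p.1*p.2) + d1*p.1 + e1*p.2 + k1,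
           N 1 0 * p.1^2 + N 1 1 * p.2^2 + N 1 2 * (p.1*p.2) + d2*p.1 + e2*p.2 + k2,
           N 2 0 * p.1^2 + N 2 1 * p.2^2 + N 2 2 * (p.1*p.2) + d3*p.1 + e3*p.2 + k3,
           p.1))
        (fun p : ℂ × ℂ =>
          (p.1^2 + D1*p.1 + E1*p.2 + K1, p.2^2 + D2*p.1 + E2*p.2 + K2,
           p.1*p.2 + D3*p.1 + E3*p.2 + K3, p.1)) := by
  have hmn00 : M 0 0 * N 0 0 + M 0 1 * N 1 0 + M 0 2 * N 2 0 = 1 := by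
    have := Matrix.ext_iff.2 hMN 0 0
    simpa [Matrix.mul_apply, Fin.sum_univ_three, Matrix.one_apply] using this
  have hnm00 : N 0 0 * M 0 0 + N 0 1 * M 1 0 + N 0 2 * M 2 0 = 1 := by
    have := Matrix.ext_iff.2 hNM 0 0
    simpa [Matrix.mul_apply, Fin.sum_univ_three, Matrix.one_apply] using this
  have hmn01 : M 0 0 * N 0 1 + M 0 1 * N 1 1 + M 0 2 * N 2 1 = 0 := by
    have := Matrix.ext_iff.2 hMN 0 1
    simpa [Matrix.mul_apply, Fin.sum_univ_three, Matrix.one_apply] using this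
  have hnm01 : N 0 0 * M 0 1 + N 0 1 * M 1 1 + N 0 2 * M 2 1 = 0 := by
    have := Matrix.ext_iff.2 hNM 0 1
    simpa [Matrix.mul_apply, Fin.sum_univ_three, Matrix.one_apply] using this
  have hmn02 : M 0 0 * N 0 2 + M 0 1 * N 1 2 + M 0 2 * N 2 2 = 0 := by
    have := Matrix.ext_iff.2 hMN 0 2
    simpa [Matrix.mul_apply, Fin.sum_univ_three, Matrix.one_apply] using this
  have hnm02 : N 0 0 * M 0 2 + N 0 1 * M 1 2 + N 0 2 * M 2 2 = 0 := by
    have := Matrix.ext_iff.2 hNM 0 2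
    simpa [Matrix.mul_apply, Fin.sum_univ_three, Matrix.one_apply] using this
  have hmn10 : M 1 0 * N 0 0 + M 1 1 * N 1 0 + M 1 2 * N 2 0 = 0 := by
    have := Matrix.ext_iff.2 hMN 1 0
    simpa [Matrix.mul_apply, Fin.sum_univ_three, Matrix.one_apply] using this
  have hnm10 : N 1 0 * M 0 0 + N 1 1 * M 1 0 + N 1 2 * M 2 0 = 0 := by
    have := Matrix.ext_iff.2 hNM 1 0
    simpa [Matrix.mul_apply, Fin.sum_univ_three, Matrix.one_apply] using this
  have hmn11 : M 1 0 * N 0 1 + M 1 1 * N 1 1 + M 1 2 * N 2 1 = 1 := by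
    have := Matrix.ext_iff.2 hMN 1 1
    simpa [Matrix.mul_apply, Fin.sum_univ_three, Matrix.one_apply] using this
  have hnm11 : N 1 0 * M 0 1 + N 1 1 * M 1 1 + N 1 2 * M 2 1 = 1 := by
    have := Matrix.ext_iff.2 hNM 1 1
    simpa [Matrix.mul_apply, Fin.sum_univ_three, Matrix.one_apply] using this
  have hmn12 : M 1 0 * N 0 2 + M 1 1 * N 1 2 + M 1 2 * N 2 2 = 0 := by
    have := Matrix.ext_iff.2 hMN 1 2
    simpa [Matrix.mul_apply, Fin.sum_univ_three, Matrix.one_apply] using this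
  have hnm12 : N 1 0 * M 0 2 + N 1 1 * M 1 2 + N 1 2 * M 2 2 = 0 := by
    have := Matrix.ext_iff.2 hNM 1 2
    simpa [Matrix.mul_apply, Fin.sum_univ_three, Matrix.one_apply] using this
  have hmn20 : M 2 0 * N 0 0 + M 2 1 * N 1 0 + M 2 2 * N 2 0 = 0 := by
    have := Matrix.ext_iff.2 hMN 2 0
    simpa [Matrix.mul_apply, Fin.sum_univ_three, Matrix.one_apply] using this
  have hnm20 : N 2 0 * M 0 0 + N 2 1 * M 1 0 + N 2 2 * M 2 0 = 0 := by
    have := Matrix.ext_iff.2 hNM 2 0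
    simpa [Matrix.mul_apply, Fin.sum_univ_three, Matrix.one_apply] using this
  have hmn21 : M 2 0 * N 0 1 + M 2 1 * N 1 1 + M 2 2 * N 2 1 = 0 := by
    have := Matrix.ext_iff.2 hMN 2 1
    simpa [Matrix.mul_apply, Fin.sum_univ_three, Matrix.one_apply] using this
  have hnm21 : N 2 0 * M 0 1 + N 2 1 * M 1 1 + N 2 2 * M 2 1 = 0 := by
    have := Matrix.ext_iff.2 hNM 2 1
    simpa [Matrix.mul_apply, Fin.sum_univ_three, Matrix.one_apply] using this
  have hmn22 : M 2 0 * N 0 2 + M 2 1 * N 1 2 + M 2 2 * N 2 2 = 1 := by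
    have := Matrix.ext_iff.2 hMN 2 2
    simpa [Matrix.mul_apply, Fin.sum_univ_three, Matrix.one_apply] using this
  have hnm22 : N 2 0 * M 0 2 + N 2 1 * M 1 2 + N 2 2 * M 2 2 = 1 := by
    have := Matrix.ext_iff.2 hNM 2 2
    simpa [Matrix.mul_apply, Fin.sum_univ_three, Matrix.one_apply] using this
  have h1 : ∀ v : ℂ × ℂ × ℂ × ℂ,
      mf4 (M 0 0) (M 0 1) (M 0 2) 0 (M 1 0) (M 1 1) (M 1 2) 0 (M 2 0) (M 2 1) (M 2 2) 0 0 0 0 1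
        (mf4 (N 0 0) (N 0 1) (N 0 2) 0 (N 1 0) (N 1 1) (N 1 2) 0 (N 2 0) (N 2 1) (N 2 2) 0 0 0 0 1 v) = v := by
    rintro ⟨v1,v2,v3,v4⟩; simp only [mf4, Prod.mk.injEq]
    refine ⟨by linear_combination v1 * hmn00 + v2 * hmn01 + v3 * hmn02,
            by linear_combination v1 * hmn10 + v2 * hmn11 + v3 * hmn12,
            by linear_combination v1 * hmn20 + v2 * hmn21 + v3 * hmn22, by ring⟩
  have h2 : ∀ v : ℂ × ℂ × ℂ × ℂ,
      mf4 (N 0 0) (N 0 1) (N 0 2) 0 (N 1 0) (N 1 1) (N 1 2) 0 (N 2 0) (N 2 1) (N 2 2) 0 0 0 0 1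
        (mf4 (M 0 0) (M 0 1) (M 0 2) 0 (M 1 0) (M 1 1) (M 1 2) 0 (M 2 0) (M 2 1) (M 2 2) 0 0 0 0 1 v) = v := by
    rintro ⟨v1,v2,v3,v4⟩; simp only [mf4, Prod.mk.injEq]
    refine ⟨by linear_combination v1 * hnm00 + v2 * hnm01 + v3 * hnm02,
            by linear_combination v1 * hnm10 + v2 * hnm11 + v3 * hnm12,
            by linear_combination v1 * hnm20 + v2 * hnm21 + v3 * hnm22, by ring⟩
  refine ⟨M 0 0 * d1 + M 0 1 * d2 + M 0 2 * d3, M 0 0 * e1 + M 0 1 * e2 + M 0 2 * e3,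
          M 0 0 * k1 + M 0 1 * k2 + M 0 2 * k3,
          M 1 0 * d1 + M 1 1 * d2 + M 1 2 * d3, M 1 0 * e1 + M 1 1 * e2 + M 1 2 * e3,
          M 1 0 * k1 + M 1 1 * k2 + M 1 2 * k3,
          M 2 0 * d1 + M 2 1 * d2 + M 2 2 * d3, M 2 0 * e1 + M 2 1 * e2 + M 2 2 * e3,
          M 2 0 * k1 + M 2 1 * k2 + M 2 2 * k3, ?_⟩
  apply linEquiv4_symm
  refine ⟨ae4 (M 0 0) (M 0 1) (M 0 2) 0 (M 1 0) (M 1 1) (M 1 2) 0 (M 2 0) (M 2 1) (M 2 2) 0 0 0 0 1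
              (N 0 0) (N 0 1) (N 0 2) 0 (N 1 0) (N 1 1) (N 1 2) 0 (N 2 0) (N 2 1) (N 2 2) 0 0 0 0 1
              0 h1 h2, AffineEquiv.refl ℂ _, ?_⟩
  intro p
  simp only [AffineEquiv.refl_apply, ae4_apply, mf4, Prod.mk.injEq, Prod.fst_add, Prod.snd_add,
    Prod.fst_zero, Prod.snd_zero, Prod.ext_iff]
  refine ⟨by linear_combination (-(p.1^2)) * hmn00 - p.2^2 * hmn01 - (p.1*p.2) * hmn02,
          by linear_combination (-(p.1^2)) * hmn10 - p.2^2 * hmn11 - (p.1*p.2) * hmn12,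
          by linear_combination (-(p.1^2)) * hmn20 - p.2^2 * hmn21 - (p.1*p.2) * hmn22, by ring⟩

end Stmt16Aux

namespace Stmt16Aux

set_option maxHeartbeats 2000000 in
lemma main (a1 b1 c1 d1 e1 k1 a2 b2 c2 d2 e2 k2 a3 b3 c3 d3 e3 k3 d4 e4 k4 : ℂ)
    (hd : d4 ≠ 0)
    (hindep : LinearIndependent ℂ ![![a1, b1, c1], ![a2, b2, c2], ![a3, b3, c3]]) :
    ∃ a : ℂ,
      LinEquiv4
        (fun p : ℂ × ℂ => (a1 * p.1 ^ 2 + b1 * p.1 * p.2 + c1 * p.2 ^ 2 + d1 * p.1 + e1 * p.2 + k1,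
                   a2 * p.1 ^ 2 + b2 * p.1 * p.2 + c2 * p.2 ^ 2 + d2 * p.1 + e2 * p.2 + k2,
                   a3 * p.1 ^ 2 + b3 * p.1 * p.2 + c3 * p.2 ^ 2 + d3 * p.1 + e3 * p.2 + k3,
                   d4 * p.1 + e4 * p.2 + k4))
        (fun p : ℂ × ℂ => (p.1 ^ 2 + a * p.2, p.2 ^ 2, p.1 * p.2, p.1)) := by
  have hAunit : IsUnit !![a1,b1,c1;a2,b2,c2;a3,b3,c3] :=
    Matrix.linearIndependent_rows_iff_isUnit.mp hindep
  set Nm : Matrix (Fin 3) (Fin 3) ℂ := !![a1/d4^2, a1*e4^2/d4^2 - b1*e4/d4 + c1, -2*a1*e4/d4^2 + b1/d4; a2/d4^2, a2*e4^2/d4^2 - b2*e4/d4 + c2, -2*a2*e4/d4^2 + b2/d4; a3/d4^2, a3*e4^2/d4^2 - b3*e4/d4 + c3, -2*a3*e4/d4^2 + b3/d4] with hNm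
  have en00 : Nm 0 0 = (a1/d4^2) := by rw [hNm]; rfl
  have en01 : Nm 0 1 = (a1*e4^2/d4^2 - b1*e4/d4 + c1) := by rw [hNm]; rfl
  have en02 : Nm 0 2 = (-2*a1*e4/d4^2 + b1/d4) := by rw [hNm]; rfl
  have en10 : Nm 1 0 = (a2/d4^2) := by rw [hNm]; rfl
  have en11 : Nm 1 1 = (a2*e4^2/d4^2 - b2*e4/d4 + c2) := by rw [hNm]; rfl
  have en12 : Nm 1 2 = (-2*a2*e4/d4^2 + b2/d4) := by rw [hNm]; rfl
  have en20 : Nm 2 0 = (a3/d4^2) := by rw [hNm]; rfl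
  have en21 : Nm 2 1 = (a3*e4^2/d4^2 - b3*e4/d4 + c3) := by rw [hNm]; rfl
  have en22 : Nm 2 2 = (-2*a3*e4/d4^2 + b3/d4) := by rw [hNm]; rfl
  have hfact : Nm = !![a1,b1,c1;a2,b2,c2;a3,b3,c3] * !![1/d4^2, e4^2/d4^2, -2*e4/d4^2; 0, -(e4/d4), 1/d4; 0, 1, 0] := by
    rw [hNm]
    ext i j
    fin_cases i <;> fin_cases j <;>
      (simp [Matrix.mul_apply, Fin.sum_univ_three, Matrix.vecHead, Matrix.vecTail]; ring)
  have hSdet : (!![1/d4^2, e4^2/d4^2, -2*e4/d4^2; 0, -(e4/d4), 1/d4; 0, 1, 0] : Matrix (Fin 3) (Fin 3) ℂ).det = -(1/d4^3) := by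
    rw [Matrix.det_fin_three]
    simp [Matrix.vecHead, Matrix.vecTail]
    ring
  have hdet : Nm.det ≠ 0 := by
    rw [hfact, Matrix.det_mul, hSdet]
    exact mul_ne_zero (isUnit_iff_ne_zero.mp ((Matrix.isUnit_iff_isUnit_det _).mp hAunit))
      (neg_ne_zero.mpr (one_div_ne_zero (pow_ne_zero 3 hd)))
  have hNu : IsUnit Nm.det := isUnit_iff_ne_zero.mpr hdet
  have hMN : Nm⁻¹ * Nm = 1 := Matrix.nonsing_inv_mul _ hNu
  have hNM : Nm * Nm⁻¹ = 1 := Matrix.mul_nonsing_inv _ hNu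
  obtain ⟨D1, E1, K1, D2, E2, K2, D3, E3, K3, hs2⟩ :=
    step2 Nm⁻¹ Nm hMN hNM (-2*a1*k4/d4^2 + d1/d4) (2*a1*e4*k4/d4^2 - b1*k4/d4 - d1*e4/d4 + e1) (a1*k4^2/d4^2 - d1*k4/d4 + k1) (-2*a2*k4/d4^2 + d2/d4) (2*a2*e4*k4/d4^2 - b2*k4/d4 - d2*e4/d4 + e2) (a2*k4^2/d4^2 - d2*k4/d4 + k2) (-2*a3*k4/d4^2 + d3/d4) (2*a3*e4*k4/d4^2 - b3*k4/d4 - d3*e4/d4 + e3) (a3*k4^2/d4^2 - d3*k4/d4 + k3)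
  have hr1 : ∀ p : ℂ × ℂ, mf2 (1/d4) (-(e4/d4)) 0 1 (mf2 d4 e4 0 1 p) = p := by
    rintro ⟨x, y⟩; simp only [mf2, Prod.mk.injEq]
    refine ⟨by field_simp; ring, by ring⟩
  have hr2 : ∀ p : ℂ × ℂ, mf2 d4 e4 0 1 (mf2 (1/d4) (-(e4/d4)) 0 1 p) = p := by
    rintro ⟨x, y⟩; simp only [mf2, Prod.mk.injEq]
    refine ⟨by field_simp; ring, by ring⟩
  have hcomp : ∀ p : ℂ × ℂ,
      (fun p : ℂ × ℂ => (Nm 0 0 * p.1^2 + Nm 0 1 * p.2^2 + Nm 0 2 * (p.1*p.2) + (-2*a1*k4/d4^2 + d1/d4)*p.1 + (2*a1*e4*k4/d4^2 - b1*k4/d4 - d1*e4/d4 + e1)*p.2 + (a1*k4^2/d4^2 - d1*k4/d4 + k1),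
           Nm 1 0 * p.1^2 + Nm 1 1 * p.2^2 + Nm 1 2 * (p.1*p.2) + (-2*a2*k4/d4^2 + d2/d4)*p.1 + (2*a2*e4*k4/d4^2 - b2*k4/d4 - d2*e4/d4 + e2)*p.2 + (a2*k4^2/d4^2 - d2*k4/d4 + k2),
           Nm 2 0 * p.1^2 + Nm 2 1 * p.2^2 + Nm 2 2 * (p.1*p.2) + (-2*a3*k4/d4^2 + d3/d4)*p.1 + (2*a3*e4*k4/d4^2 - b3*k4/d4 - d3*e4/d4 + e3)*p.2 + (a3*k4^2/d4^2 - d3*k4/d4 + k3),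
           p.1)) p
        = (fun p : ℂ × ℂ => (a1 * p.1 ^ 2 + b1 * p.1 * p.2 + c1 * p.2 ^ 2 + d1 * p.1 + e1 * p.2 + k1,
                   a2 * p.1 ^ 2 + b2 * p.1 * p.2 + c2 * p.2 ^ 2 + d2 * p.1 + e2 * p.2 + k2,
                   a3 * p.1 ^ 2 + b3 * p.1 * p.2 + c3 * p.2 ^ 2 + d3 * p.1 + e3 * p.2 + k3,
                   d4 * p.1 + e4 * p.2 + k4)) (ae2 (1/d4) (-(e4/d4)) 0 1 d4 e4 0 1 (-(k4/d4), 0) hr1 hr2 p) := by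
    intro p
    rw [ae2_apply]
    simp only [mf2, Prod.mk_add_mk, Prod.mk.injEq, en00, en01, en02, en10, en11, en12,
      en20, en21, en22]
    refine ⟨?_, ?_, ?_, ?_⟩
    · ring_nf; try field_simp; try ring
    · ring_nf; try field_simp; try ring
    · ring_nf; try field_simp; try ring
    · field_simp
      ring
  have c0 : LinEquiv4 (fun p : ℂ × ℂ => (Nm 0 0 * p.1^2 + Nm 0 1 * p.2^2 + Nm 0 2 * (p.1*p.2) + (-2*a1*k4/d4^2 + d1/d4)*p.1 + (2*a1*e4*k4/d4^2 - b1*k4/d4 - d1*e4/d4 + e1)*p.2 + (a1*k4^2/d4^2 - d1*k4/d4 + k1),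
           Nm 1 0 * p.1^2 + Nm 1 1 * p.2^2 + Nm 1 2 * (p.1*p.2) + (-2*a2*k4/d4^2 + d2/d4)*p.1 + (2*a2*e4*k4/d4^2 - b2*k4/d4 - d2*e4/d4 + e2)*p.2 + (a2*k4^2/d4^2 - d2*k4/d4 + k2),
           Nm 2 0 * p.1^2 + Nm 2 1 * p.2^2 + Nm 2 2 * (p.1*p.2) + (-2*a3*k4/d4^2 + d3/d4)*p.1 + (2*a3*e4*k4/d4^2 - b3*k4/d4 - d3*e4/d4 + e3)*p.2 + (a3*k4^2/d4^2 - d3*k4/d4 + k3),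
           p.1)) (fun p : ℂ × ℂ => (a1 * p.1 ^ 2 + b1 * p.1 * p.2 + c1 * p.2 ^ 2 + d1 * p.1 + e1 * p.2 + k1,
                   a2 * p.1 ^ 2 + b2 * p.1 * p.2 + c2 * p.2 ^ 2 + d2 * p.1 + e2 * p.2 + k2,
                   a3 * p.1 ^ 2 + b3 * p.1 * p.2 + c3 * p.2 ^ 2 + d3 * p.1 + e3 * p.2 + k3,
                   d4 * p.1 + e4 * p.2 + k4)) :=
    linEquiv4_congr (ae2 (1/d4) (-(e4/d4)) 0 1 d4 e4 0 1 (-(k4/d4), 0) hr1 hr2) hcomp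
  have c1 := linEquiv4_symm c0
  exact ⟨E1, linEquiv4_trans (linEquiv4_trans c1 hs2)
      (step23 D1 E1 K1 D2 E2 K2 D3 E3 K3)⟩

end Stmt16Aux

namespace Stmt16Aux

lemma stepB {F : ℂ × ℂ → ℂ × ℂ × ℂ × ℂ}
    (h : LinEquiv4 F (fun p : ℂ × ℂ => (p.1^2 + 0 * p.2, p.2^2, p.1*p.2, p.1))) :
    LinEquiv4 F (fun p : ℂ × ℂ => (p.1^2, p.2^2, p.1*p.2, p.1)) := by
  obtain ⟨L, R, h⟩ := h
  exact ⟨L, R, fun p => by simpa using h p⟩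

lemma swap_indep {a₁ b₁ c₁ a₂ b₂ c₂ a₃ b₃ c₃ : ℂ}
    (h : LinearIndependent ℂ ![![a₁, b₁, c₁], ![a₂, b₂, c₂], ![a₃, b₃, c₃]]) :
    LinearIndependent ℂ ![![c₁, b₁, a₁], ![c₂, b₂, a₂], ![c₃, b₃, a₃]] := by
  have h2 := h.map' (LinearEquiv.funCongrLeft ℂ ℂ (Equiv.swap (0 : Fin 3) 2)).toLinearMap
    (LinearEquiv.ker _)
  have hfun : (⇑(LinearEquiv.funCongrLeft ℂ ℂ (Equiv.swap (0 : Fin 3) 2)).toLinearMap ∘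
      ![![a₁, b₁, c₁], ![a₂, b₂, c₂], ![a₃, b₃, c₃]])
      = ![![c₁, b₁, a₁], ![c₂, b₂, a₂], ![c₃, b₃, a₃]] := by
    funext i
    fin_cases i <;>
      · funext j
        fin_cases j <;>
          simp [LinearEquiv.funCongrLeft, Equiv.swap_apply_def]
  rwa [hfun] at h2

end Stmt16Aux


open Stmt16Aux

/-- Every quadratic map `G = (g₁,g₂,g₃,g₄) : ℂ² → ℂ⁴` whose last component is
linear nonconstant and whose first three components have linearly independent
quadratic parts is linearly equivalent to `(x²+ay, y², xy, x)` for some `a`;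
hence to `(x²+y, y², xy, x)` if `a ≠ 0` and to `(x², y², xy, x)` if `a = 0`. -/
theorem stmt16 (a₁ b₁ c₁ d₁ e₁ k₁ a₂ b₂ c₂ d₂ e₂ k₂ a₃ b₃ c₃ d₃ e₃ k₃ d₄ e₄ k₄ : ℂ)
    (hlin : (d₄, e₄) ≠ (0, 0))
    (hindep : LinearIndependent ℂ ![![a₁, b₁, c₁], ![a₂, b₂, c₂], ![a₃, b₃, c₃]]) :
    ∃ a : ℂ,
      LinEquiv4
        (fun p => (a₁ * p.1 ^ 2 + b₁ * p.1 * p.2 + c₁ * p.2 ^ 2 + d₁ * p.1 + e₁ * p.2 + k₁,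
                   a₂ * p.1 ^ 2 + b₂ * p.1 * p.2 + c₂ * p.2 ^ 2 + d₂ * p.1 + e₂ * p.2 + k₂,
                   a₃ * p.1 ^ 2 + b₃ * p.1 * p.2 + c₃ * p.2 ^ 2 + d₃ * p.1 + e₃ * p.2 + k₃,
                   d₄ * p.1 + e₄ * p.2 + k₄))
        (fun p => (p.1 ^ 2 + a * p.2, p.2 ^ 2, p.1 * p.2, p.1)) ∧
      (a ≠ 0 →
        LinEquiv4
          (fun p => (a₁ * p.1 ^ 2 + b₁ * p.1 * p.2 + c₁ * p.2 ^ 2 + d₁ * p.1 + e₁ * p.2 + k₁,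
                     a₂ * p.1 ^ 2 + b₂ * p.1 * p.2 + c₂ * p.2 ^ 2 + d₂ * p.1 + e₂ * p.2 + k₂,
                     a₃ * p.1 ^ 2 + b₃ * p.1 * p.2 + c₃ * p.2 ^ 2 + d₃ * p.1 + e₃ * p.2 + k₃,
                     d₄ * p.1 + e₄ * p.2 + k₄))
          (fun p => (p.1 ^ 2 + p.2, p.2 ^ 2, p.1 * p.2, p.1))) ∧
      (a = 0 →
        LinEquiv4
          (fun p => (a₁ * p.1 ^ 2 + b₁ * p.1 * p.2 + c₁ * p.2 ^ 2 + d₁ * p.1 + e₁ * p.2 + k₁,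
                     a₂ * p.1 ^ 2 + b₂ * p.1 * p.2 + c₂ * p.2 ^ 2 + d₂ * p.1 + e₂ * p.2 + k₂,
                     a₃ * p.1 ^ 2 + b₃ * p.1 * p.2 + c₃ * p.2 ^ 2 + d₃ * p.1 + e₃ * p.2 + k₃,
                     d₄ * p.1 + e₄ * p.2 + k₄))
          (fun p => (p.1 ^ 2, p.2 ^ 2, p.1 * p.2, p.1))) := by
  have key : ∃ a : ℂ,
      LinEquiv4
        (fun p => (a₁ * p.1 ^ 2 + b₁ * p.1 * p.2 + c₁ * p.2 ^ 2 + d₁ * p.1 + e₁ * p.2 + k₁,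
                   a₂ * p.1 ^ 2 + b₂ * p.1 * p.2 + c₂ * p.2 ^ 2 + d₂ * p.1 + e₂ * p.2 + k₂,
                   a₃ * p.1 ^ 2 + b₃ * p.1 * p.2 + c₃ * p.2 ^ 2 + d₃ * p.1 + e₃ * p.2 + k₃,
                   d₄ * p.1 + e₄ * p.2 + k₄))
        (fun p : ℂ × ℂ => (p.1 ^ 2 + a * p.2, p.2 ^ 2, p.1 * p.2, p.1)) := by
    rcases eq_or_ne d₄ 0 with h0 | hd
    · have he : e₄ ≠ 0 := by
        intro h
        exact hlin (by rw [h0, h])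
      obtain ⟨a, ha⟩ := main c₁ b₁ a₁ e₁ d₁ k₁ c₂ b₂ a₂ e₂ d₂ k₂ c₃ b₃ a₃ e₃ d₃ k₃ e₄ d₄ k₄ he
        (swap_indep hindep)
      have hsw : ∀ p : ℂ × ℂ, mf2 0 1 1 0 (mf2 0 1 1 0 p) = p := by
        rintro ⟨x, y⟩; simp [mf2]
      have hms : ∀ p : ℂ × ℂ,
          (fun p => (a₁ * p.1 ^ 2 + b₁ * p.1 * p.2 + c₁ * p.2 ^ 2 + d₁ * p.1 + e₁ * p.2 + k₁,
                   a₂ * p.1 ^ 2 + b₂ * p.1 * p.2 + c₂ * p.2 ^ 2 + d₂ * p.1 + e₂ * p.2 + k₂,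
                   a₃ * p.1 ^ 2 + b₃ * p.1 * p.2 + c₃ * p.2 ^ 2 + d₃ * p.1 + e₃ * p.2 + k₃,
                   d₄ * p.1 + e₄ * p.2 + k₄)) p = (fun p : ℂ × ℂ => (c₁ * p.1 ^ 2 + b₁ * p.1 * p.2 + a₁ * p.2 ^ 2 + e₁ * p.1 + d₁ * p.2 + k₁,
                   c₂ * p.1 ^ 2 + b₂ * p.1 * p.2 + a₂ * p.2 ^ 2 + e₂ * p.1 + d₂ * p.2 + k₂,
                   c₃ * p.1 ^ 2 + b₃ * p.1 * p.2 + a₃ * p.2 ^ 2 + e₃ * p.1 + d₃ * p.2 + k₃,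
                   e₄ * p.1 + d₄ * p.2 + k₄)) (ae2 0 1 1 0 0 1 1 0 (0, 0) hsw hsw p) := by
        intro p
        rw [ae2_apply]
        simp only [mf2, Prod.mk_add_mk, Prod.mk.injEq]
        refine ⟨by ring, by ring, by ring, by ring⟩
      have cm : LinEquiv4
          (fun p => (a₁ * p.1 ^ 2 + b₁ * p.1 * p.2 + c₁ * p.2 ^ 2 + d₁ * p.1 + e₁ * p.2 + k₁,
                   a₂ * p.1 ^ 2 + b₂ * p.1 * p.2 + c₂ * p.2 ^ 2 + d₂ * p.1 + e₂ * p.2 + k₂,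
                   a₃ * p.1 ^ 2 + b₃ * p.1 * p.2 + c₃ * p.2 ^ 2 + d₃ * p.1 + e₃ * p.2 + k₃,
                   d₄ * p.1 + e₄ * p.2 + k₄))
          (fun p : ℂ × ℂ => (c₁ * p.1 ^ 2 + b₁ * p.1 * p.2 + a₁ * p.2 ^ 2 + e₁ * p.1 + d₁ * p.2 + k₁,
                   c₂ * p.1 ^ 2 + b₂ * p.1 * p.2 + a₂ * p.2 ^ 2 + e₂ * p.1 + d₂ * p.2 + k₂,
                   c₃ * p.1 ^ 2 + b₃ * p.1 * p.2 + a₃ * p.2 ^ 2 + e₃ * p.1 + d₃ * p.2 + k₃,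
                   e₄ * p.1 + d₄ * p.2 + k₄)) :=
        linEquiv4_congr (ae2 0 1 1 0 0 1 1 0 (0, 0) hsw hsw) hms
      exact ⟨a, linEquiv4_trans cm ha⟩
    · obtain ⟨a, ha⟩ := main a₁ b₁ c₁ d₁ e₁ k₁ a₂ b₂ c₂ d₂ e₂ k₂ a₃ b₃ c₃ d₃ e₃ k₃ d₄ e₄ k₄ hd hindep
      exact ⟨a, ha⟩
  obtain ⟨a, ha⟩ := key
  refine ⟨a, ha, fun hne => stepA hne ha, fun h0 => ?_⟩
  subst h0
  exact stepB ha
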